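/- Let B be a strictly lower triangular real p×p matrix, let D be a diagonal p×p matrix with strictly positive diagonal entries, set M = (I − B)⁻¹ and Σ = M · D · Mᵀ. Let r and k be distinct indices. If either (i) M_{kr} = 0, or (ii) r < k and M_{kj} = M_{kr} · M_{rj} for every index j < r, then Σ_{kk} > M_{kr}² · Σ_{rr}. -/
import Mathlib


open Matrix

section Aux

variable {p : ℕ} (B : Matrix (Fin p) (Fin p) ℝ)

lemma aux_blockTri (hB : ∀ i j : Fin p, i ≤ j → B i j = 0) :
    BlockTriangular (1 - B) OrderDual.toDual := by
  intro i j hij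
  have hij' : i < j := hij
  simp [Matrix.one_apply_ne (ne_of_lt hij'), hB i j hij'.le]

lemma aux_det (hB : ∀ i j : Fin p, i ≤ j → B i j = 0) : (1 - B).det = 1 := by
  rw [Matrix.det_of_lowerTriangular _ (aux_blockTri B hB)]
  have : ∀ i : Fin p, (1 - B) i i = 1 := by
    intro i; simp [hB i i le_rfl]
  simp [this]

end Aux

/-- Proposition 2 of the paper in matrix form.  `B` is strictly lower triangular
(so the variables are sorted by a causal ordering), `D` is the diagonal error
covariance, `M = (I - B)⁻¹` and `Σ = M D Mᵀ`.  If either `k` is not a descendant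
of `r` (i.e. `M k r = 0`), or `r < k` and every causal effect of an earlier
variable `j` on `k` factors through `r` (i.e. `M k j = M k r * M r j` for all
`j < r`), then `Σ k k > (M k r)² * Σ r r`. -/
theorem variance_gt_of_no_bypass
    {p : ℕ} (B D : Matrix (Fin p) (Fin p) ℝ)
    (hB : ∀ i j : Fin p, i ≤ j → B i j = 0)
    (hDdiag : ∀ i j : Fin p, i ≠ j → D i j = 0)
    (hDpos : ∀ i : Fin p, 0 < D i i)
    (M : Matrix (Fin p) (Fin p) ℝ) (hM : M = (1 - B)⁻¹)
    (S : Matrix (Fin p) (Fin p) ℝ) (hS : S = M * D * Mᵀ)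
    (r k : Fin p) (hrk : r ≠ k)
    (hcond : M k r = 0 ∨
      (r < k ∧ ∀ j : Fin p, j < r → M k j = M k r * M r j)) :
    S k k > (M k r) ^ 2 * S r r := by
  set A : Matrix (Fin p) (Fin p) ℝ := 1 - B with hA
  have hdet : A.det = 1 := aux_det B hB
  have hdetunit : IsUnit A.det := by rw [hdet]; exact isUnit_one
  haveI : Invertible A := A.invertibleOfIsUnitDet hdetunit
  have hMA : M * A = 1 := by rw [hM]; exact Matrix.nonsing_inv_mul A hdetunit
  -- M is lower triangular
  have hMtri : ∀ i j : Fin p, i < j → M i j = 0 := by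
    intro i j hij
    have := Matrix.blockTriangular_inv_of_blockTriangular (aux_blockTri B hB)
    rw [hM]
    exact this (show OrderDual.toDual j < OrderDual.toDual i from hij)
  -- diagonal of M is 1
  have hMdiag : ∀ i : Fin p, M i i = 1 := by
    intro i
    have h1 : (M * A) i i = 1 := by rw [hMA]; simp
    rw [Matrix.mul_apply] at h1
    rw [Finset.sum_eq_single i] at h1
    · have : A i i = 1 := by simp [hA, hB i i le_rfl]
      rwa [this, mul_one] at h1
    · intro j _ hji
      rcases lt_or_gt_of_ne hji with h | h
      · have : A j i = 0 := by
          simp only [hA, Matrix.sub_apply, Matrix.one_apply_ne (ne_of_lt h), hB j i h.le]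
          ring
        rw [this, mul_zero]
      · rw [hMtri i j h, zero_mul]
    · intro h; exact absurd (Finset.mem_univ i) h
  -- entry formula for S
  have hSentry : ∀ i : Fin p, S i i = ∑ j, M i j ^ 2 * D j j := by
    intro i
    rw [hS, Matrix.mul_apply]
    apply Finset.sum_congr rfl
    intro j _
    rw [Matrix.mul_apply, Finset.sum_eq_single j]
    · rw [Matrix.transpose_apply]; ring
    · intro l _ hlj; rw [hDdiag l j hlj, mul_zero]
    · intro h; exact absurd (Finset.mem_univ j) h
  rw [hSentry k, hSentry r, Finset.mul_sum]
  apply Finset.sum_lt_sum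
  · intro j _
    rcases hcond with h0 | ⟨hrlt, hfac⟩
    · rw [h0]
      have := sq_nonneg (M k j)
      have := (hDpos j).le
      nlinarith [sq_nonneg (M k j), (hDpos j).le]
    · rcases lt_trichotomy j r with h | h | h
      · rw [hfac j h]; ring_nf; exact le_rfl
      · subst h; rw [hMdiag j]; ring_nf; exact le_rfl
      · rw [hMtri r j h]
        nlinarith [sq_nonneg (M k j), (hDpos j).le]
  · refine ⟨k, Finset.mem_univ k, ?_⟩
    rcases hcond with h0 | ⟨hrlt, hfac⟩
    · rw [h0, hMdiag k]
      have := hDpos k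
      nlinarith
    · rw [hMtri r k hrlt, hMdiag k]
      have := hDpos k
      nlinarith
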